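/- Let π : X → Y be a continuous surjection between compact metric spaces. Then π is semiopen if and only if the set X₀ = {x ∈ X : the set-valued map y ↦ π⁻¹(y) from Y to the space of closed subsets of X (with Vietoris/Hausdorff topology) is continuous at π(x)} is dense in X. -/

import Mathlib

open TopologicalSpace Metric Set Filter

section Aux
variable {X Y : Type*} [MetricSpace X] [MetricSpace Y]
    [CompactSpace X] [CompactSpace Y] {π : X → Y}

/-- Upper semicontinuity of the fiber map. -/
lemma fiber_usc (hc : Continuous π) (y₀ : Y) {ε : ℝ} (hε : 0 < ε) :
    ∃ δ > 0, ∀ y, dist y y₀ < δ → π ⁻¹' {y} ⊆ thickening ε (π ⁻¹' {y₀}) := by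
  set C : Set X := (thickening ε (π ⁻¹' {y₀}))ᶜ with hC
  have hCclosed : IsClosed C := (isOpen_thickening).isClosed_compl
  have hKclosed : IsClosed (π '' C) := (hCclosed.isCompact.image hc).isClosed
  have hy₀ : y₀ ∉ π '' C := by
    rintro ⟨x, hxC, rfl⟩
    exact hxC (self_subset_thickening hε _ (by simp))
  have : (π '' C)ᶜ ∈ nhds y₀ := hKclosed.isOpen_compl.mem_nhds hy₀
  rcases Metric.mem_nhds_iff.1 this with ⟨δ, hδ, hball⟩
  refine ⟨δ, hδ, fun y hy x hx => ?_⟩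
  by_contra hxt
  exact hball (show y ∈ ball y₀ δ from by rwa [mem_ball]) ⟨x, hxt, hx⟩

omit [CompactSpace X] [CompactSpace Y] [MetricSpace Y] in
/-- The fibers are nonempty. -/
lemma fiber_ne (hs : Function.Surjective π) (y : Y) : (π ⁻¹' {y}).Nonempty := by
  rcases hs y with ⟨x, rfl⟩; exact ⟨x, rfl⟩

/-- Lower semicontinuity of `y ↦ infDist x (π⁻¹ y)`. -/
lemma g_lsc (hc : Continuous π) (hs : Function.Surjective π) (x : X) :
    LowerSemicontinuous (fun y => infDist x (π ⁻¹' {y})) := by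
  intro y₀ c hcy₀
  set ε := (infDist x (π ⁻¹' {y₀}) - c) / 2 with hεdef
  have hε : 0 < ε := by dsimp [ε]; linarith
  rcases fiber_usc hc y₀ hε with ⟨δ, hδ, H⟩
  have : ball y₀ δ ∈ nhds y₀ := ball_mem_nhds _ hδ
  filter_upwards [this] with y hy
  have hsub := H y (by rwa [mem_ball] at hy)
  by_contra hlt
  push_neg at hlt
  have hlt' : infDist x (π ⁻¹' {y}) < c + ε := lt_of_le_of_lt hlt (by linarith)
  rcases (infDist_lt_iff (fiber_ne hs y)).1 hlt' with ⟨a, ha, hda⟩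
  rcases mem_thickening_iff.1 (hsub ha) with ⟨b, hb, hab⟩
  have h1 : infDist x (π ⁻¹' {y₀}) ≤ dist x b := infDist_le_dist_of_mem hb
  have h2 : dist x b ≤ dist x a + dist a b := dist_triangle _ _ _
  dsimp [ε] at *; linarith

/-- Continuity of the fiber map (in Hausdorff distance terms) at `y₀` follows from
continuity at `y₀` of the inf-distance functions from a dense sequence. -/
lemma fiber_cont (hc : Continuous π) (hs : Function.Surjective π)
    (u : ℕ → X) (hu : DenseRange u) (y₀ : Y)
    (hg : ∀ n, ContinuousAt (fun y => infDist (u n) (π ⁻¹' {y})) y₀) :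
    ∀ ε > 0, ∀ᶠ y in nhds y₀, hausdorffDist (π ⁻¹' {y}) (π ⁻¹' {y₀}) < ε := by
  intro ε hε
  classical
  -- cover the fiber of y₀ by balls of radius ε/8 centered at points of the sequence
  have hcov : π ⁻¹' {y₀} ⊆ ⋃ n, ball (u n) (ε/8) := by
    intro x _
    rcases Metric.dense_iff.1 hu x (ε/8) (by linarith) with ⟨z, hz1, ⟨n, rfl⟩⟩
    exact mem_iUnion.2 ⟨n, by rwa [mem_ball, dist_comm]⟩
  have hcomp : IsCompact (π ⁻¹' {y₀}) := (isClosed_singleton.preimage hc).isCompact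
  rcases hcomp.elim_finite_subcover (fun n => ball (u n) (ε/8)) (fun n => isOpen_ball) hcov
    with ⟨t, ht⟩
  set t' : Finset ℕ := t.filter (fun n => (ball (u n) (ε/8) ∩ π ⁻¹' {y₀}).Nonempty) with ht'
  have hcov' : π ⁻¹' {y₀} ⊆ ⋃ n ∈ t', ball (u n) (ε/8) := by
    intro x hx
    rcases mem_iUnion₂.1 (ht hx) with ⟨n, hn, hxn⟩
    exact mem_iUnion₂.2 ⟨n, Finset.mem_filter.2 ⟨hn, ⟨x, hxn, hx⟩⟩, hxn⟩
  have hg0 : ∀ n ∈ t', infDist (u n) (π ⁻¹' {y₀}) < ε/8 := by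
    intro n hn
    rcases (Finset.mem_filter.1 hn).2 with ⟨a, ha1, ha2⟩
    exact lt_of_le_of_lt (infDist_le_dist_of_mem ha2) (by rwa [mem_ball, dist_comm] at ha1)
  rcases fiber_usc hc y₀ (show (0:ℝ) < ε/2 by linarith) with ⟨δ₁, hδ₁, H₁⟩
  have hev1 : ∀ᶠ y in nhds y₀, dist y y₀ < δ₁ :=
    Metric.eventually_nhds_iff.2 ⟨δ₁, hδ₁, fun {y} h => h⟩
  have hev2 : ∀ᶠ y in nhds y₀, ∀ n ∈ t',
      dist (infDist (u n) (π ⁻¹' {y})) (infDist (u n) (π ⁻¹' {y₀})) < ε/8 := by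
    rw [eventually_all_finset]
    intro n _
    exact (Metric.tendsto_nhds.1 (hg n)) (ε/8) (by linarith)
  filter_upwards [hev1, hev2] with y h1 h2
  have hne0 : (π ⁻¹' {y₀}).Nonempty := fiber_ne hs y₀
  have hney : (π ⁻¹' {y}).Nonempty := fiber_ne hs y
  have hHd : hausdorffDist (π ⁻¹' {y}) (π ⁻¹' {y₀}) ≤ ε/2 := by
    apply hausdorffDist_le_of_infDist (by linarith)
    · intro a ha
      have := H₁ y h1 ha
      rw [mem_thickening_iff_infDist_lt hne0] at this
      linarith
    · intro x hx
      rcases mem_iUnion₂.1 (hcov' hx) with ⟨n, hn, hxn⟩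
      have h3 : infDist x (π ⁻¹' {y}) ≤ infDist (u n) (π ⁻¹' {y}) + dist x (u n) :=
        infDist_le_infDist_add_dist
      have h4 : infDist (u n) (π ⁻¹' {y}) < infDist (u n) (π ⁻¹' {y₀}) + ε/8 := by
        have := h2 n hn; rw [Real.dist_eq] at this
        have := abs_lt.1 this
        linarith [this.2]
      have h5 := hg0 n hn
      rw [mem_ball] at hxn
      linarith
  linarith

omit [CompactSpace X] [CompactSpace Y] [MetricSpace X] in
/-- A lower semicontinuous real function avoiding the "bad sets" at `y₀` is continuous there. -/
lemma lsc_continuousAt (g : Y → ℝ) (hg : LowerSemicontinuous g) (y₀ : Y)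
    (h : ∀ q r : ℚ, (q : ℝ) < (r : ℝ) →
      ¬(g y₀ ≤ q ∧ y₀ ∈ closure {y | (r : ℝ) ≤ g y})) :
    ContinuousAt g y₀ := by
  rw [ContinuousAt]
  apply tendsto_order.2
  refine ⟨fun c hc => hg y₀ c hc, fun c hc => ?_⟩
  by_contra hcon
  have hfreq : ∃ᶠ y in nhds y₀, c ≤ g y := by
    rw [Filter.not_eventually] at hcon
    exact hcon.mono fun y hy => not_lt.1 hy
  obtain ⟨q, hq1, hq2⟩ := exists_rat_btwn hc
  obtain ⟨r, hr1, hr2⟩ := exists_rat_btwn hq2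
  refine h q r hr1 ⟨hq1.le, mem_closure_iff_frequently.2 (hfreq.mono fun y hy => ?_)⟩
  exact le_trans hr2.le hy

end Aux

/-- A continuous surjection between compact metric spaces is semiopen iff the set
of points `x` where the fiber map `y ↦ π⁻¹(y)` (into the hyperspace of closed
subsets of `X` with the Hausdorff metric) is continuous at `π x` is dense in `X`. -/
theorem stmt_1 {X Y : Type*} [MetricSpace X] [MetricSpace Y]
    [CompactSpace X] [CompactSpace Y]
    (π : X → Y) (hc : Continuous π) (hs : Function.Surjective π) :
    (∀ U : Set X, IsOpen U → U.Nonempty → (interior (π '' U)).Nonempty) ↔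
      Dense {x : X |
        ContinuousAt
          (fun y : Y =>
            (⟨⟨π ⁻¹' {y}, (isClosed_singleton.preimage hc).isCompact⟩, hs y⟩ :
              NonemptyCompacts X))
          (π x)} := by
  classical
  constructor
  · intro hsemi
    rcases isEmpty_or_nonempty X with hX | hX
    · intro x; exact (IsEmpty.false x).elim
    set g : ℕ → Y → ℝ := fun n y => infDist (denseSeq X n) (π ⁻¹' {y}) with hgdef
    set A : ℕ × ℚ × ℚ → Set Y := fun p =>
      if (p.2.1 : ℝ) < (p.2.2 : ℝ) then
        {y | g p.1 y ≤ (p.2.1 : ℝ)} ∩ closure {y | (p.2.2 : ℝ) ≤ g p.1 y}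
      else ∅ with hAdef
    have hclosed : ∀ p, IsClosed (A p) := by
      rintro ⟨n, q, r⟩
      simp only [A]
      split_ifs with hqr
      · exact IsClosed.inter ((g_lsc hc hs _).isClosed_preimage _) isClosed_closure
      · exact isClosed_empty
    have hint : ∀ p, interior (π ⁻¹' A p) = ∅ := by
      rintro ⟨n, q, r⟩
      by_contra hne
      rw [← Ne, ← Set.nonempty_iff_ne_empty] at hne
      obtain ⟨y, hy⟩ := hsemi _ isOpen_interior hne
      by_cases hqr : (q : ℝ) < (r : ℝ)
      · have hAeq : A (n, q, r) =
            {y | g n y ≤ (q : ℝ)} ∩ closure {y | (r : ℝ) ≤ g n y} := by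
          simp only [A, if_pos hqr]
        rw [hAeq] at hy
        have hVsub : interior (π '' interior
            (π ⁻¹' ({y | g n y ≤ (q : ℝ)} ∩ closure {y | (r : ℝ) ≤ g n y}))) ⊆
            {y | g n y ≤ (q : ℝ)} ∩ closure {y | (r : ℝ) ≤ g n y} := by
          refine interior_subset.trans ?_
          exact (Set.image_mono (f := π) interior_subset).trans (Set.image_preimage_subset π _)
        have hy2 : y ∈ closure {y | (r : ℝ) ≤ g n y} := (hVsub hy).2
        rw [_root_.mem_closure_iff] at hy2
        obtain ⟨z, hzV, hzS2⟩ := hy2 _ isOpen_interior hy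
        have hz1 : g n z ≤ (q : ℝ) := (hVsub hzV).1
        simp only [Set.mem_setOf_eq] at hzS2
        linarith
      · have hAeq : A (n, q, r) = ∅ := by simp only [A, if_neg hqr]
        rw [hAeq] at hy
        simp at hy
    have hdense : Dense (⋂ p, (π ⁻¹' A p)ᶜ) :=
      dense_iInter_of_isOpen
        (fun p => ((hclosed p).preimage hc).isOpen_compl)
        (fun p => interior_eq_empty_iff_dense_compl.1 (hint p))
    refine hdense.mono ?_
    intro x hx
    simp only [Set.mem_iInter, Set.mem_compl_iff, Set.mem_preimage] at hx
    have hgc : ∀ n, ContinuousAt (g n) (π x) := by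
      intro n
      refine lsc_continuousAt _ (g_lsc hc hs _) _ ?_
      intro q r hqr hcontra
      refine hx (n, q, r) ?_
      simp only [A, if_pos hqr]
      exact ⟨hcontra.1, hcontra.2⟩
    have hF := fiber_cont hc hs (denseSeq X) (denseRange_denseSeq X) (π x) hgc
    simp only [Set.mem_setOf_eq]
    rw [ContinuousAt, Metric.tendsto_nhds]
    intro ε hε
    filter_upwards [hF ε hε] with y h
    rw [NonemptyCompacts.dist_eq]
    exact h
  · intro hdense U hUopen hUne
    obtain ⟨x, hxS, hxU⟩ := hdense.exists_mem_open hUopen hUne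
    rw [Set.mem_setOf_eq] at hxS
    obtain ⟨ε, hε, hball⟩ := Metric.isOpen_iff.1 hUopen x hxU
    obtain ⟨δ, hδ, hF⟩ := Metric.continuousAt_iff.1 hxS ε hε
    refine ⟨π x, mem_interior.2 ⟨ball (π x) δ, ?_, isOpen_ball, mem_ball_self hδ⟩⟩
    intro y hy
    have hd := hF (show dist y (π x) < δ from by rwa [mem_ball] at hy)
    rw [NonemptyCompacts.dist_eq] at hd
    have hbdd : ∀ z : Y, Bornology.IsBounded (π ⁻¹' {z}) := fun z =>
      ((isClosed_singleton.preimage hc).isCompact).isBounded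
    have hne : EMetric.hausdorffEdist (π ⁻¹' {π x}) (π ⁻¹' {y}) ≠ ⊤ :=
      hausdorffEdist_ne_top_of_nonempty_of_bounded (fiber_ne hs _) (fiber_ne hs _)
        (hbdd _) (hbdd _)
    have h1 : infDist x (π ⁻¹' {y}) ≤ hausdorffDist (π ⁻¹' {π x}) (π ⁻¹' {y}) :=
      infDist_le_hausdorffDist_of_mem rfl hne
    rw [hausdorffDist_comm] at hd
    have h2 : infDist x (π ⁻¹' {y}) < ε := lt_of_le_of_lt h1 hd
    obtain ⟨x', hx'fib, hdist⟩ := (infDist_lt_iff (fiber_ne hs y)).1 h2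
    exact ⟨x', hball (by rwa [mem_ball, dist_comm]), hx'fib⟩
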